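/- Let Y be a vector space with a shift-invariant metric, let R : Y ⇒ Y (constant in a second variable z) and T : Z ⇒ Y be multifunctions, and suppose (R, T) is locally sum-stable around (z̄, ȳ, w̄₁, w̄₂) and T has the Aubin property around (z̄, w̄₂) with constant D > 0. Then the map G : Y × Z ⇒ Y defined by G(y, z) := R(y) + T(z) has the Aubin property with respect to z uniformly in y around ((ȳ, z̄), w̄₁ + w̄₂) with constant D. That is, there are neighborhoods U of ȳ, V of z̄, W' of w̄₁ + w̄₂ such that for all y ∈ U and z₁, z₂ ∈ V, e((R(y) + T(z₁)) ∩ W', R(y) + T(z₂)) ≤ D d(z₁, z₂). -/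

import Mathlib

open Metric Set Filter Topology ENNReal

noncomputable def exc {α : Type*} [PseudoEMetricSpace α] (A B : Set α) : ℝ≥0∞ :=
  ⨆ a ∈ A, EMetric.infEdist a B

open Pointwise

theorem stmt16 {Y Z : Type*} [AddCommGroup Y] [MetricSpace Y] [MetricSpace Z]
    (hshift : ∀ a b c : Y, dist (a + c) (b + c) = dist a b)
    (R : Y → Set Y) (T : Z → Set Y)
    (ya w₁ : Y) (za : Z) (w₂ : Y)
    (hR : w₁ ∈ R ya) (hT : w₂ ∈ T za)
    (D : ℝ) (hD : 0 < D)
    (hstab : ∀ ε > (0:ℝ), ∃ δ > (0:ℝ), ∀ z ∈ Metric.ball za δ, ∀ y ∈ Metric.ball ya δ,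
      ∀ w ∈ (R y + T z) ∩ Metric.ball (w₁ + w₂) δ,
        ∃ a ∈ R y ∩ Metric.ball w₁ ε, ∃ b ∈ T z ∩ Metric.ball w₂ ε, w = a + b)
    (hAubT : ∃ V ∈ 𝓝 za, ∃ W₂ ∈ 𝓝 w₂, ∀ z₁ ∈ V, ∀ z₂ ∈ V,
      exc (T z₁ ∩ W₂) (T z₂) ≤ ENNReal.ofReal (D * dist z₁ z₂)) :
    ∃ U ∈ 𝓝 ya, ∃ V ∈ 𝓝 za, ∃ W' ∈ 𝓝 (w₁ + w₂), ∀ y ∈ U, ∀ z₁ ∈ V, ∀ z₂ ∈ V,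
      exc ((R y + T z₁) ∩ W') (R y + T z₂) ≤ ENNReal.ofReal (D * dist z₁ z₂) := by
  obtain ⟨V, hV, W₂, hW₂, hAub⟩ := hAubT
  obtain ⟨ε, hε, hball⟩ := Metric.mem_nhds_iff.1 hW₂
  obtain ⟨δ, hδ, hst⟩ := hstab ε hε
  refine ⟨Metric.ball ya δ, Metric.ball_mem_nhds _ hδ,
    V ∩ Metric.ball za δ, Filter.inter_mem hV (Metric.ball_mem_nhds _ hδ),
    Metric.ball (w₁ + w₂) δ, Metric.ball_mem_nhds _ hδ, ?_⟩
  intro y hy z₁ hz₁ z₂ hz₂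
  refine iSup₂_le fun w hw => ?_
  obtain ⟨a, ⟨haR, -⟩, b, ⟨hbT, hbB⟩, rfl⟩ := hst z₁ hz₁.2 y hy w hw
  have h1 : EMetric.infEdist (a + b) (R y + T z₂) ≤ EMetric.infEdist b (T z₂) := by
    unfold EMetric.infEdist Metric.infEDist
    refine le_iInf₂ fun b' hb' => ?_
    refine le_trans (iInf₂_le (a + b') (Set.add_mem_add haR hb')) ?_
    rw [edist_dist, edist_dist, add_comm a b, add_comm a b', hshift]
  have h2 : EMetric.infEdist b (T z₂) ≤ exc (T z₁ ∩ W₂) (T z₂) :=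
    le_iSup₂ (f := fun c (_ : c ∈ T z₁ ∩ W₂) => EMetric.infEdist c (T z₂)) b
      ⟨hbT, hball hbB⟩
  exact h1.trans (h2.trans (hAub z₁ hz₁.1 z₂ hz₂.1))
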